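/- For α ∈ (0,1) and γ ∈ (0,1), as γ → 0⁺ with α = β fixed, η_{1,3}(γ) := ((1−2^{−γ})^{−1/(1−α)} − 1)^α / (1 − 2^γ + 2^γ(1−2^{−γ})^{−α/(1−α)}) satisfies η_{1,3}(γ) = 1 − γ ln 2 + o(γ); in particular η_{1,3}(γ) → 1 as γ → 0⁺. -/

import Mathlib

open Topology Filter Asymptotics

theorem stmt9 (α : ℝ) (hα : α ∈ Set.Ioo (0:ℝ) 1)
    (η : ℝ → ℝ)
    (hη : ∀ γ : ℝ, η γ =
      ((1 - (2:ℝ) ^ (-γ)) ^ (-1/(1-α)) - 1) ^ α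
        / (1 - (2:ℝ) ^ γ + (2:ℝ) ^ γ * (1 - (2:ℝ) ^ (-γ)) ^ (-α/(1-α)))) :
    (fun γ : ℝ => η γ - (1 - γ * Real.log 2)) =o[𝓝[>] (0:ℝ)] (fun γ : ℝ => γ) ∧
    Tendsto η (𝓝[>] (0:ℝ)) (𝓝 1) := by
  obtain ⟨hα0, hα1⟩ := hα
  have h1α : (0:ℝ) < 1 - α := by linarith
  set L := Real.log 2 with hLdef
  have hL : 0 < L := Real.log_pos (by norm_num)
  set b := α / (1 - α) with hbdef
  have hb : 0 < b := div_pos hα0 h1α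
  have hc : (0:ℝ) < 1/(1-α) := by positivity
  have hcb : 1/(1-α) = 1 + b := by rw [hbdef]; field_simp; ring
  have h2e : ∀ x : ℝ, (2:ℝ) ^ x = Real.exp (L * x) := fun x =>
    Real.rpow_def_of_pos (by norm_num) x
  set s : ℝ → ℝ := fun γ => 1 - Real.exp (-(L * γ)) with hsdef
  have hsv : ∀ γ : ℝ, 1 - (2:ℝ)^(-γ) = s γ := by
    intro γ; rw [h2e]; simp [hsdef, mul_neg]
  have hs_pos : ∀ γ ∈ Set.Ioi (0:ℝ), 0 < s γ := by
    intro γ hγ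
    have : Real.exp (-(L * γ)) < 1 := by
      rw [Real.exp_lt_one_iff]
      have : 0 < L * γ := mul_pos hL hγ
      linarith
    simp only [hsdef]; linarith
  have hs1 : ∀ γ ∈ Set.Ioi (0:ℝ), s γ < 1 := by
    intro γ _
    have := Real.exp_pos (-(L * γ))
    simp only [hsdef]; linarith
  have hs_cont : Continuous s := by fun_prop
  have hs0 : s 0 = 0 := by simp [hsdef]
  have hs_tendsto0 : Tendsto s (𝓝[>] (0:ℝ)) (𝓝 0) := by
    have := (hs_cont.tendsto 0).mono_left (nhdsWithin_le_nhds (s := Set.Ioi (0:ℝ)))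
    rwa [hs0] at this
  have hs_tendstoIoi : Tendsto s (𝓝[>] (0:ℝ)) (𝓝[>] (0:ℝ)) := by
    rw [tendsto_nhdsWithin_iff]
    exact ⟨hs_tendsto0, by filter_upwards [self_mem_nhdsWithin] with γ hγ using hs_pos γ hγ⟩
  have hrpow : ∀ e : ℝ, 0 < e → Tendsto (fun v : ℝ => v ^ e) (𝓝[>] (0:ℝ)) (𝓝 0) := by
    intro e he
    have h := (Real.continuousAt_rpow_const 0 e (Or.inr he.le)).tendsto
    rw [Real.zero_rpow (ne_of_gt he)] at h
    exact h.mono_left nhdsWithin_le_nhds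
  have hsb0 : Tendsto (fun γ => s γ ^ b) (𝓝[>] (0:ℝ)) (𝓝 0) :=
    (hrpow b hb).comp hs_tendstoIoi
  have hsc0 : Tendsto (fun γ => s γ ^ (1/(1-α))) (𝓝[>] (0:ℝ)) (𝓝 0) :=
    (hrpow _ hc).comp hs_tendstoIoi
  have hE : Tendsto (fun γ => Real.exp (L * γ)) (𝓝[>] (0:ℝ)) (𝓝 1) := by
    have hcont : Continuous (fun γ : ℝ => Real.exp (L * γ)) := by fun_prop
    have := (hcont.tendsto 0).mono_left (nhdsWithin_le_nhds (s := Set.Ioi (0:ℝ)))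
    simpa using this
  have hlin : Tendsto (fun γ : ℝ => 1 - γ * L) (𝓝[>] (0:ℝ)) (𝓝 1) := by
    have hcont : Continuous (fun γ : ℝ => 1 - γ * L) := by fun_prop
    have := (hcont.tendsto 0).mono_left (nhdsWithin_le_nhds (s := Set.Ioi (0:ℝ)))
    simpa using this
  have hD : Tendsto (fun γ => Real.exp (L * γ) + (1 - Real.exp (L * γ)) * s γ ^ b)
      (𝓝[>] (0:ℝ)) (𝓝 1) := by
    have := hE.add (((tendsto_const_nhds (x := (1:ℝ))).sub hE).mul hsb0)
    simpa using this
  -- slope helper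
  have slope_lim : ∀ (f : ℝ → ℝ) (d : ℝ), HasDerivAt f d 0 →
      Tendsto (fun γ => (f γ - f 0) / γ) (𝓝[>] (0:ℝ)) (𝓝 d) := by
    intro f d hf
    have h := hasDerivAt_iff_tendsto_slope.mp hf
    have h2 : Tendsto (slope f 0) (𝓝[>] (0:ℝ)) (𝓝 d) :=
      h.mono_left (nhdsWithin_mono _ (fun x hx => ne_of_gt hx))
    refine h2.congr fun γ => ?_
    rw [slope_def_field, sub_zero]
  -- limit 1 : s γ / γ → L
  have h1 : Tendsto (fun γ => s γ / γ) (𝓝[>] (0:ℝ)) (𝓝 L) := by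
    have hds : HasDerivAt s L 0 := by
      have := ((((hasDerivAt_id (0:ℝ)).const_mul L).neg).exp).const_sub 1
      simpa [hsdef] using this
    have := slope_lim s L hds
    simpa [hs0] using this
  -- limit 2 : (1 - exp(Lγ))/γ → -L
  have h2 : Tendsto (fun γ => (1 - Real.exp (L * γ)) / γ) (𝓝[>] (0:ℝ)) (𝓝 (-L)) := by
    have hds : HasDerivAt (fun γ : ℝ => 1 - Real.exp (L * γ)) (-L) 0 := by
      have := (((hasDerivAt_id (0:ℝ)).const_mul L).exp).const_sub 1
      simpa using this
    have := slope_lim _ _ hds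
    simpa using this
  -- limit 3 : (1 - (1-γL) exp(Lγ))/γ → 0
  have h3 : Tendsto (fun γ => (1 - (1 - γ * L) * Real.exp (L * γ)) / γ)
      (𝓝[>] (0:ℝ)) (𝓝 0) := by
    have hds : HasDerivAt (fun γ : ℝ => 1 - (1 - γ * L) * Real.exp (L * γ)) 0 0 := by
      have hp : HasDerivAt (fun γ : ℝ => (1 - γ * L) * Real.exp (L * γ))
          (-(1 * L) * Real.exp (L * 0) + (1 - 0 * L) * (Real.exp (L * 0) * (L * 1))) 0 :=
        (((hasDerivAt_id (0:ℝ)).mul_const L).const_sub 1).mul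
          (((hasDerivAt_id (0:ℝ)).const_mul L).exp)
      have := hp.const_sub 1
      simpa using this
    have := slope_lim _ _ hds
    simpa using this
  -- slope limit for (1-v)^α
  have hq : HasDerivAt (fun v : ℝ => (1 - v) ^ α) (-α) 0 := by
    have hinner : HasDerivAt (fun v : ℝ => 1 - v) (-1) 0 := (hasDerivAt_id 0).const_sub 1
    have houter : HasDerivAt (fun x : ℝ => x ^ α) (α * 1 ^ (α - 1)) ((fun v : ℝ => 1 - v) 0) := by
      simpa using (Real.hasDerivAt_rpow_const (x := (1:ℝ)) (p := α) (Or.inl one_ne_zero))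
    have := houter.comp 0 hinner
    exact this.congr_deriv (by simp)
  have hq_slope : Tendsto (fun v : ℝ => ((1 - v) ^ α - 1) / v) (𝓝[≠] (0:ℝ)) (𝓝 (-α)) := by
    have h := hasDerivAt_iff_tendsto_slope.mp hq
    refine h.congr fun v => ?_
    rw [slope_def_field, sub_zero]
    norm_num
  have hu_ne : Tendsto (fun γ => s γ ^ (1/(1-α))) (𝓝[>] (0:ℝ)) (𝓝[≠] (0:ℝ)) := by
    rw [tendsto_nhdsWithin_iff]
    refine ⟨hsc0, ?_⟩
    filter_upwards [self_mem_nhdsWithin] with γ hγ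
    exact ne_of_gt (Real.rpow_pos_of_pos (hs_pos γ hγ) _)
  -- limit 5 : u/γ → 0
  have h5 : Tendsto (fun γ => s γ ^ (1/(1-α)) / γ) (𝓝[>] (0:ℝ)) (𝓝 0) := by
    have hlim : Tendsto (fun γ => (s γ / γ) * s γ ^ b) (𝓝[>] (0:ℝ)) (𝓝 0) := by
      simpa using h1.mul hsb0
    refine hlim.congr' ?_
    filter_upwards [self_mem_nhdsWithin] with γ hγ
    rw [hcb, Real.rpow_add (hs_pos γ hγ), Real.rpow_one, mul_div_right_comm]
  -- limit 6 : ((1-u)^α - 1)/γ → 0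
  have h6 : Tendsto (fun γ => ((1 - s γ ^ (1/(1-α))) ^ α - 1) / γ) (𝓝[>] (0:ℝ)) (𝓝 0) := by
    have hlim := (hq_slope.comp hu_ne).mul h5
    rw [neg_mul, mul_zero, neg_zero] at hlim
    refine hlim.congr' ?_
    filter_upwards [self_mem_nhdsWithin] with γ hγ
    have hu : s γ ^ (1/(1-α)) ≠ 0 := ne_of_gt (Real.rpow_pos_of_pos (hs_pos γ hγ) _)
    simp only [Function.comp]
    rw [div_mul_div_comm, mul_comm (s γ ^ (1/(1-α))) γ,
      mul_div_mul_right _ _ hu]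
  -- key algebraic identity
  have hkey : ∀ γ ∈ Set.Ioi (0:ℝ), η γ = (1 - s γ ^ (1/(1-α))) ^ α /
      (Real.exp (L * γ) + (1 - Real.exp (L * γ)) * s γ ^ b) := by
    intro γ hγ
    have hsγ : 0 < s γ := hs_pos γ hγ
    have hs1γ : s γ < 1 := hs1 γ hγ
    have hE1 : (2:ℝ) ^ γ = Real.exp (L * γ) := h2e γ
    have hd1 : (-1) / (1-α) = -(1/(1-α)) := by ring
    have hd2 : (-α) / (1-α) = -b := by rw [hbdef]; ring
    rw [hη, hsv, hE1, hd1, hd2]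
    set S := s γ
    set c := 1/(1-α) with hcdef
    set E := Real.exp (L * γ)
    have hSc1 : S ^ c ≤ 1 := Real.rpow_le_one hsγ.le hs1γ.le hc.le
    have hfac : S ^ (-c) - 1 = S ^ (-c) * (1 - S ^ c) := by
      rw [mul_sub, mul_one, ← Real.rpow_add hsγ]
      norm_num
    have hnum : (S ^ (-c) * (1 - S ^ c)) ^ α = S ^ (-b) * (1 - S ^ c) ^ α := by
      rw [Real.mul_rpow (Real.rpow_nonneg hsγ.le _) (by linarith), ← Real.rpow_mul hsγ.le]
      congr 1
      rw [hbdef, hcdef]; ring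
    have hbb : S ^ (-b) * S ^ b = 1 := by
      rw [← Real.rpow_add hsγ]; norm_num
    have hden : 1 - E + E * S ^ (-b) = S ^ (-b) * (E + (1 - E) * S ^ b) := by
      have expand : S ^ (-b) * (E + (1 - E) * S ^ b)
          = S ^ (-b) * E + (1 - E) * (S ^ (-b) * S ^ b) := by ring
      rw [expand, hbb]; ring
    rw [hfac, hnum, hden,
      mul_div_mul_left _ _ (ne_of_gt (Real.rpow_pos_of_pos hsγ (-b)))]
  -- main limit for the compensated quotient
  have hG : Tendsto (fun γ =>
      ( ((1 - s γ ^ (1/(1-α))) ^ α - 1) / γ + (1 - (1 - γ * L) * Real.exp (L * γ)) / γ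
        - (1 - γ * L) * ((1 - Real.exp (L * γ)) / γ) * s γ ^ b )
      / (Real.exp (L * γ) + (1 - Real.exp (L * γ)) * s γ ^ b))
      (𝓝[>] (0:ℝ)) (𝓝 0) := by
    have := ((h6.add h3).sub ((hlin.mul h2).mul hsb0)).div hD one_ne_zero
    simpa [Pi.div_def] using this
  have hF : Tendsto (fun γ => (η γ - (1 - γ * L)) / γ) (𝓝[>] (0:ℝ)) (𝓝 0) := by
    refine hG.congr' ?_
    filter_upwards [self_mem_nhdsWithin, hD.eventually_ne one_ne_zero] with γ hγ hDγ
    rw [hkey γ hγ]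
    have hγ0 : γ ≠ 0 := ne_of_gt hγ
    generalize Real.exp (L * γ) = E at hDγ ⊢
    generalize s γ ^ b = B at hDγ ⊢
    generalize (1 - s γ ^ (1/(1-α))) ^ α = A
    field_simp
    ring
  constructor
  · rw [isLittleO_iff_tendsto']
    · exact hF
    · filter_upwards [self_mem_nhdsWithin] with γ hγ h0
      exact absurd h0 (ne_of_gt hγ)
  · have hid : Tendsto (fun γ : ℝ => γ) (𝓝[>] (0:ℝ)) (𝓝 0) :=
      tendsto_id.mono_right nhdsWithin_le_nhds
    have hmain : Tendsto (fun γ => ((η γ - (1 - γ * L)) / γ) * γ + (1 - γ * L))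
        (𝓝[>] (0:ℝ)) (𝓝 1) := by
      simpa using (hF.mul hid).add hlin
    refine hmain.congr' ?_
    filter_upwards [self_mem_nhdsWithin] with γ hγ
    rw [div_mul_cancel₀ _ (ne_of_gt hγ), sub_add_cancel]
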